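/- In the positive braid monoid B_n⁺ (n ≥ 2), the elements x satisfying x = σ_{n-1}σ_{n-2}···σ_m·y for some m with 2 ≤ m ≤ n and some y ∈ B_{m-1}⁺ are exactly the left divisors-in-the-order sense characterized as those strictly below δ_n = σ_{n-1}···σ₁ in the ordering <⁺ defined recursively via n-splittings. Equivalently: x <⁺ δ_n holds if and only if x = σ_{n-1}···σ_m·y with n ≥ m ≥ 2 and y ∈ B_{m-1}⁺. -/

import Mathlib

/-- The braid relations on the free monoid over `Fin N`
(generator `i : Fin N` stands for `σ_{i+1}`). -/
def braidRel (N : ℕ) : FreeMonoid (Fin N) → FreeMonoid (Fin N) → Prop := fun a b =>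
  (∃ i j : Fin N, ((i : ℕ) + 2 ≤ (j : ℕ) ∨ (j : ℕ) + 2 ≤ (i : ℕ)) ∧
      a = FreeMonoid.of i * FreeMonoid.of j ∧ b = FreeMonoid.of j * FreeMonoid.of i) ∨
  (∃ i j : Fin N, ((i : ℕ) + 1 = (j : ℕ) ∨ (j : ℕ) + 1 = (i : ℕ)) ∧
      a = FreeMonoid.of i * FreeMonoid.of j * FreeMonoid.of i ∧
      b = FreeMonoid.of j * FreeMonoid.of i * FreeMonoid.of j)

def braidCon (N : ℕ) : Con (FreeMonoid (Fin N)) := conGen (braidRel N)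

/-- The positive braid monoid on `N+1` strands `B_{N+1}⁺`,
with generators `σ_1, …, σ_N` indexed by `Fin N`. -/
abbrev PosBraid (N : ℕ) := (braidCon N).Quotient

/-- The generator `σ_{i+1}` of the positive braid monoid. -/
def sigma {N : ℕ} (i : Fin N) : PosBraid N := (braidCon N).mk' (FreeMonoid.of i)

/-- The flip automorphism `Φ_{N+1} : σ_i ↦ σ_{N+1-i}`. -/
def flipH (N : ℕ) : PosBraid N →* PosBraid N :=
  Con.lift _ ((braidCon N).mk'.comp (FreeMonoid.map Fin.rev)) <| by
    apply Con.conGen_le.mpr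
    rintro a b (⟨i, j, hij, rfl, rfl⟩ | ⟨i, j, hij, rfl, rfl⟩) <;>
      simp only [Con.ker_rel, MonoidHom.comp_apply, map_mul, FreeMonoid.map_of] <;>
      refine (Con.eq _).mpr (ConGen.Rel.of _ _ ?_)
    · exact Or.inl ⟨Fin.rev i, Fin.rev j, by
        simp only [Fin.val_rev]; omega, rfl, rfl⟩
    · exact Or.inr ⟨Fin.rev i, Fin.rev j, by
        simp only [Fin.val_rev]; omega, rfl, rfl⟩

/-- The inclusion `B_{N+1}⁺ → B_{N+2}⁺`. -/
def incl (N : ℕ) : PosBraid N →* PosBraid (N + 1) :=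
  Con.lift _ ((braidCon (N + 1)).mk'.comp (FreeMonoid.map Fin.castSucc)) <| by
    apply Con.conGen_le.mpr
    rintro a b (⟨i, j, hij, rfl, rfl⟩ | ⟨i, j, hij, rfl, rfl⟩) <;>
      simp only [Con.ker_rel, MonoidHom.comp_apply, map_mul, FreeMonoid.map_of] <;>
      refine (Con.eq _).mpr (ConGen.Rel.of _ _ ?_)
    · exact Or.inl ⟨i.castSucc, j.castSucc, by simpa using hij, rfl, rfl⟩
    · exact Or.inr ⟨i.castSucc, j.castSucc, by simpa using hij, rfl, rfl⟩

/-- Product `f^{p-1}(x_p) ⋯ f(x_2) · x_1` of the list `[x_p, …, x_1]`,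
where each entry is twisted by an iterate of `f`. -/
def prodFlip {M : Type*} [Monoid M] (f : M → M) : List M → M
  | [] => 1
  | a :: t => f^[t.length] a * prodFlip f t

/-- `l = [x_p, …, x_1]` (a list of elements of `B_{k+1}⁺`) is the `(k+2)`-splitting of
`x ∈ B_{k+2}⁺` : `x = Φ^{p-1}(x_p) ⋯ Φ(x_2)·x_1`, the leading entry is non-trivial, and
for every `r ≥ 2` the only generator `σ_i` right-dividing `Φ^{p-r}(x_p) ⋯ Φ(x_{r+1})·x_r`
is `σ_1`. -/
def IsSplit {k : ℕ} (x : PosBraid (k + 1)) (l : List (PosBraid k)) : Prop :=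
  x = prodFlip (⇑(flipH (k + 1))) (l.map (incl k)) ∧
  l.head? ≠ some 1 ∧
  ∀ j, 1 ≤ j → j < l.length →
    (∃ z, prodFlip (⇑(flipH (k + 1))) ((l.take j).map (incl k)) =
        z * sigma (⟨0, Nat.succ_pos k⟩ : Fin (k + 1))) ∧
    ∀ i : Fin (k + 1),
      (∃ z, prodFlip (⇑(flipH (k + 1))) ((l.take j).map (incl k)) = z * sigma i) →
      i = (⟨0, Nat.succ_pos k⟩ : Fin (k + 1))

/-- `σ_{i+1}` as an element of `B_{N+1}⁺`, extended by `1` for out-of-range indices. -/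
def sigmaP (N : ℕ) (i : ℕ) : PosBraid N := if h : i < N then sigma ⟨i, h⟩ else 1

/-- `δ_{N+1} = σ_N σ_{N-1} ⋯ σ_1` in `B_{N+1}⁺`. -/
def deltaFull (N : ℕ) : PosBraid N := ((List.ofFn (sigma (N := N))).reverse).prod

/-- `Δ_m` (the Garside element of `B_m⁺`), viewed inside `B_{N+1}⁺`,
via `Δ_1 = 1` and `Δ_{m+1} = σ_1 ⋯ σ_m · Δ_m`. -/
def DeltaP (N : ℕ) : ℕ → PosBraid N
  | 0 => 1
  | m + 1 => ((List.range m).map (sigmaP N)).prod * DeltaP N m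

/-- `\widehatΔ_{N+1,d} = Φ^d(δ_{N+1}) ⋯ Φ²(δ_{N+1}) · Φ(δ_{N+1})` (`d` factors). -/
def hatDelta (N : ℕ) (d : ℕ) : PosBraid N :=
  ((List.range d).map (fun j => (⇑(flipH N))^[d - j] (deltaFull N))).prod

/-- ShortLex extension of a relation: compare lists first by length,
then lexicographically (from the left). -/
def SL {α : Type*} (r : α → α → Prop) (s t : List α) : Prop :=
  s.length < t.length ∨ (s.length = t.length ∧ List.Lex r s t)

/-- The ordering `<⁺` of `B_{k+1}⁺`, defined recursively: on `B_2⁺` it is the comparison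
of exponents of `σ_1`; on `B_{k+2}⁺` it is the ShortLex comparison of `(k+2)`-splittings,
entries being compared by `<⁺` on `B_{k+1}⁺`. -/
def ordP : (k : ℕ) → PosBraid k → PosBraid k → Prop
  | 0 => fun _ _ => False
  | 1 => fun x y => ∃ p q : ℕ, x = sigma (0 : Fin 1) ^ p ∧ y = sigma (0 : Fin 1) ^ q ∧ p < q
  | (k + 2) => fun x y => ∃ lx ly : List (PosBraid (k + 1)),
      IsSplit x lx ∧ IsSplit y ly ∧ SL (ordP (k + 1)) lx ly

namespace BraidAux

/-- A word contains a factor which is one side of a braid relation. -/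
def Redex (N : ℕ) (w : List (Fin N)) : Prop :=
  (∃ (u v : List (Fin N)) (i j : Fin N),
      ((i : ℕ) + 2 ≤ (j : ℕ) ∨ (j : ℕ) + 2 ≤ (i : ℕ)) ∧ w = u ++ i :: j :: v) ∨
  (∃ (u v : List (Fin N)) (i j : Fin N),
      ((i : ℕ) + 1 = (j : ℕ) ∨ (j : ℕ) + 1 = (i : ℕ)) ∧ w = u ++ i :: j :: i :: v)

lemma Redex.append_right {N} {w : List (Fin N)} (h : Redex N w) (c : List (Fin N)) :
    Redex N (w ++ c) := by
  rcases h with ⟨u, v, i, j, hij, rfl⟩ | ⟨u, v, i, j, hij, rfl⟩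
  · exact Or.inl ⟨u, v ++ c, i, j, hij, by simp⟩
  · exact Or.inr ⟨u, v ++ c, i, j, hij, by simp⟩

lemma Redex.append_left {N} {w : List (Fin N)} (h : Redex N w) (c : List (Fin N)) :
    Redex N (c ++ w) := by
  rcases h with ⟨u, v, i, j, hij, rfl⟩ | ⟨u, v, i, j, hij, rfl⟩
  · exact Or.inl ⟨c ++ u, v, i, j, hij, by simp⟩
  · exact Or.inr ⟨c ++ u, v, i, j, hij, by simp⟩

/-- The congruence used to show that redex-free words are alone in their class. -/
def goodCon (N : ℕ) : Con (FreeMonoid (Fin N)) where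
  r a b := (¬ Redex N a.toList → a = b) ∧ (¬ Redex N b.toList → b = a)
  iseqv := by
    refine ⟨fun a => ⟨fun _ => rfl, fun _ => rfl⟩, fun h => ⟨h.2, h.1⟩, ?_⟩
    rintro a b c ⟨h1, h1'⟩ ⟨h2, h2'⟩
    constructor
    · intro ha; have hab := h1 ha; rw [hab] at ha ⊢; exact h2 ha
    · intro hc; have hcb := h2' hc; rw [hcb] at hc ⊢; exact h1' hc
  mul' := by
    rintro a b c d ⟨h1, h1'⟩ ⟨h2, h2'⟩
    constructor
    · intro h
      rw [FreeMonoid.toList_mul] at h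
      have hac : ¬ Redex N a.toList := fun hr => h (hr.append_right _)
      have hcc : ¬ Redex N c.toList := fun hr => h (hr.append_left _)
      rw [h1 hac, h2 hcc]
    · intro h
      rw [FreeMonoid.toList_mul] at h
      have hac : ¬ Redex N b.toList := fun hr => h (hr.append_right _)
      have hcc : ¬ Redex N d.toList := fun hr => h (hr.append_left _)
      rw [h1' hac, h2' hcc]

lemma braid_le_good (N : ℕ) : braidCon N ≤ goodCon N := by
  apply Con.conGen_le.mpr
  rintro a b (⟨i, j, hij, rfl, rfl⟩ | ⟨i, j, hij, rfl, rfl⟩)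
  · constructor
    · intro h; exact absurd (Or.inl ⟨[], [], i, j, hij, by simp⟩) h
    · intro h; exact absurd (Or.inl ⟨[], [], j, i, hij.symm, by simp⟩) h
  · constructor
    · intro h; exact absurd (Or.inr ⟨[], [], i, j, hij, by simp⟩) h
    · intro h; exact absurd (Or.inr ⟨[], [], j, i, hij.symm, by simp⟩) h

/-- Convenient constructor for elements of the quotient from words. -/
def mkW {N : ℕ} (w : List (Fin N)) : PosBraid N := (braidCon N).mk' (FreeMonoid.ofList w)

lemma mkW_append {N : ℕ} (u v : List (Fin N)) : mkW (u ++ v) = mkW u * mkW v := by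
  simp [mkW, FreeMonoid.ofList_append]

lemma mkW_nil {N : ℕ} : mkW ([] : List (Fin N)) = 1 := rfl

lemma sigma_eq_mkW {N : ℕ} (i : Fin N) : sigma i = mkW [i] := rfl

lemma mkW_surjective {N : ℕ} (x : PosBraid N) : ∃ w : List (Fin N), x = mkW w := by
  obtain ⟨a, ha⟩ := Con.mk'_surjective (c := braidCon N) x
  exact ⟨FreeMonoid.toList a, by simp [mkW, ← ha]⟩

/-- Key rigidity lemma: if `v` is redex-free then any word equal to it in the braid
monoid is literally equal to it. -/
lemma eq_of_mkW_frozen {N : ℕ} {u v : List (Fin N)} (h : mkW u = mkW v)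
    (hv : ¬ Redex N v) : u = v := by
  have hc : braidCon N (FreeMonoid.ofList u) (FreeMonoid.ofList v) := by
    rw [← Con.eq]
    simpa [mkW] using h
  have := (braid_le_good N hc).2
  have hvt : (FreeMonoid.ofList v).toList = v := FreeMonoid.toList_ofList v
  rw [hvt] at this
  have := this hv
  have : FreeMonoid.ofList u = FreeMonoid.ofList v := this.symm
  exact FreeMonoid.ofList.injective this

def Desc {N : ℕ} (a b : Fin N) : Prop := (a : ℕ) = (b : ℕ) + 1
def Asc {N : ℕ} (a b : Fin N) : Prop := (b : ℕ) = (a : ℕ) + 1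

lemma notRedex_of_chain'_desc {N : ℕ} {w : List (Fin N)} (h : List.Chain' Desc w) :
    ¬ Redex N w := by
  rintro (⟨u, v, i, j, hij, rfl⟩ | ⟨u, v, i, j, hij, rfl⟩)
  · have : List.Chain' Desc [i, j] :=
      h.infix ⟨u, v, by simp⟩
    have := List.isChain_pair.mp this
    unfold Desc at this; omega
  · have h3 : List.Chain' Desc [i, j, i] :=
      h.infix ⟨u, v, by simp⟩
    unfold List.Chain' at h3
    rw [List.isChain_cons_cons, List.isChain_cons_cons] at h3
    obtain ⟨h1, h2, _⟩ := h3
    unfold Desc at h1 h2; omega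

lemma notRedex_of_chain'_asc {N : ℕ} {w : List (Fin N)} (h : List.Chain' Asc w) :
    ¬ Redex N w := by
  rintro (⟨u, v, i, j, hij, rfl⟩ | ⟨u, v, i, j, hij, rfl⟩)
  · have : List.Chain' Asc [i, j] := h.infix ⟨u, v, by simp⟩
    have := List.isChain_pair.mp this
    unfold Asc at this; omega
  · have h3 : List.Chain' Asc [i, j, i] := h.infix ⟨u, v, by simp⟩
    unfold List.Chain' at h3
    rw [List.isChain_cons_cons, List.isChain_cons_cons] at h3
    obtain ⟨h1, h2, _⟩ := h3
    unfold Asc at h1 h2; omega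

lemma notRedex_nil {N : ℕ} : ¬ Redex N [] :=
  notRedex_of_chain'_desc List.isChain_nil

lemma notRedex_singleton {N : ℕ} (a : Fin N) : ¬ Redex N [a] :=
  notRedex_of_chain'_desc (List.isChain_singleton a)

lemma notRedex_fin_one (w : List (Fin 1)) : ¬ Redex 1 w := by
  rintro (⟨u, v, i, j, hij, rfl⟩ | ⟨u, v, i, j, hij, rfl⟩) <;>
    · have hi := i.isLt; have hj := j.isLt; omega

lemma flipH_mkW {N : ℕ} (w : List (Fin N)) :
    flipH N (mkW w) = mkW (w.map Fin.rev) := by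
  simp only [mkW, flipH]
  rfl

lemma incl_mkW {N : ℕ} (w : List (Fin N)) :
    incl N (mkW w) = mkW (w.map Fin.castSucc) := by
  simp only [mkW, incl]
  rfl

lemma incl_sigma {N : ℕ} (i : Fin N) : incl N (sigma i) = sigma i.castSucc :=
  incl_mkW [i]

lemma flipH_sigma {N : ℕ} (i : Fin N) : flipH N (sigma i) = sigma i.rev :=
  flipH_mkW [i]

lemma sigma_pow {N : ℕ} (i : Fin N) (p : ℕ) :
    sigma i ^ p = mkW (List.replicate p i) := by
  induction p with
  | zero => rfl
  | succ p ih =>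
      rw [pow_succ, ih, sigma_eq_mkW, ← mkW_append, ← List.replicate_succ']

lemma sigma_ne_one {N : ℕ} (i : Fin N) : sigma i ≠ 1 := by
  intro h
  have : [i] = ([] : List (Fin N)) := eq_of_mkW_frozen h notRedex_nil
  simp at this

lemma prod_map_sigma {N : ℕ} (l : List (Fin N)) :
    (l.map (fun i => sigma i)).prod = mkW l := by
  induction l with
  | nil => rfl
  | cons a t ih =>
      rw [List.map_cons, List.prod_cons, ih, sigma_eq_mkW, ← mkW_append]
      rfl

/-- The word `[N-1, N-2, …, 0]` representing `δ_{N+1}`. -/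
def dword (N : ℕ) : List (Fin N) := (List.finRange N).reverse

lemma dword_length (N : ℕ) : (dword N).length = N := by simp [dword]

lemma deltaFull_eq (N : ℕ) : deltaFull N = mkW (dword N) := by
  rw [deltaFull, List.ofFn_eq_map, ← List.map_reverse, prod_map_sigma, dword]

lemma dword_succ (N : ℕ) :
    dword (N + 1) = Fin.last N :: (dword N).map Fin.castSucc := by
  have h1 : List.finRange (N + 1) =
      ((List.finRange N).map Fin.castSucc) ++ [Fin.last N] := by
    rw [← List.ofFn_id, List.ofFn_succ']
    simp [List.ofFn_eq_map]
  rw [dword, h1, List.reverse_append]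
  simp [dword, List.map_reverse]

lemma chain'_desc_dword (N : ℕ) : List.Chain' Desc (dword N) := by
  rw [dword]
  unfold List.Chain'
  rw [List.isChain_reverse]
  rw [List.isChain_iff_getElem]
  intro i h
  simp only [List.getElem_finRange]
  show Desc _ _
  simp only [Desc, flip, Fin.coe_cast]

lemma notRedex_dword (N : ℕ) : ¬ Redex N (dword N) :=
  notRedex_of_chain'_desc (chain'_desc_dword N)

lemma chain'_asc_revmap_of_prefix {N : ℕ} {P : List (Fin N)} (h : P <+: dword N) :
    List.Chain' Asc (P.map Fin.rev) := by
  have hd : List.Chain' Desc P := List.IsChain.infix (chain'_desc_dword N) h.isInfix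
  unfold List.Chain' at hd ⊢
  rw [List.isChain_map]
  refine List.IsChain.imp ?_ hd
  intro a b hab
  have ha := a.isLt
  have hb := b.isLt
  simp only [Desc] at hab
  simp only [Asc, Fin.val_rev]
  omega

lemma map_rev_map_rev {N : ℕ} (w : List (Fin N)) :
    (w.map Fin.rev).map Fin.rev = w := by
  simp [List.map_map, Function.comp_def, Fin.rev_rev]

lemma prodFlip_concat {M : Type*} [Monoid M] (f : M →* M) (l : List M) (a : M) :
    prodFlip ⇑f (l ++ [a]) = f (prodFlip ⇑f l) * a := by
  induction l with
  | nil => simp [prodFlip]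
  | cons c t ih =>
      show f^[(t ++ [a]).length] c * prodFlip ⇑f (t ++ [a]) = _
      rw [ih, List.length_append]
      show f^[t.length + 1] c * _ = _
      rw [Function.iterate_succ_apply' f t.length c]
      show _ = f (f^[t.length] c * prodFlip ⇑f t) * a
      rw [map_mul, mul_assoc]

lemma prodFlip_singleton {M : Type*} [Monoid M] (f : M → M) (a : M) :
    prodFlip f [a] = a := by simp [prodFlip]

lemma prodFlip_pair {M : Type*} [Monoid M] (f : M → M) (a b : M) :
    prodFlip f [a, b] = f a * b := by
  simp [prodFlip]

lemma isSplit_cases {k : ℕ} {x : PosBraid (k + 1)} {l : List (PosBraid k)}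
    (h : IsSplit x l) :
    (l = [] ∧ x = 1) ∨
    (∃ a, l = [a] ∧ x = incl k a ∧ a ≠ 1) ∨
    (∃ ys a, l = ys ++ [a] ∧ ys ≠ [] ∧
      x = flipH (k + 1) (prodFlip (⇑(flipH (k + 1))) (ys.map (incl k))) * incl k a ∧
      ∃ z, prodFlip (⇑(flipH (k + 1))) (ys.map (incl k)) =
          z * sigma (⟨0, Nat.succ_pos k⟩ : Fin (k + 1))) := by
  obtain ⟨hx, hh, hj⟩ := h
  rcases List.eq_nil_or_concat l with rfl | ⟨ys, a, hl⟩
  · exact Or.inl ⟨rfl, hx⟩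
  · rw [List.concat_eq_append] at hl
    subst hl
    cases ys with
    | nil =>
        refine Or.inr (Or.inl ⟨a, by simp, ?_, ?_⟩)
        · rw [hx]; simp [prodFlip_singleton]
        · intro ha; exact hh (by simp [ha])
    | cons b t =>
        refine Or.inr (Or.inr ⟨b :: t, a, rfl, by simp, ?_, ?_⟩)
        · rw [hx, List.map_append, List.map_singleton,
            prodFlip_concat (flipH (k + 1))]
        · have hlen : (b :: t).length < ((b :: t) ++ [a]).length := by simp
          have := hj (b :: t).length (by simp) hlen
          rw [List.take_left] at this
          exact this.1

lemma flip_mul_incl_ne_sigma0 {k : ℕ} (Q : PosBraid (k + 2)) (b : PosBraid (k + 1))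
    (hdiv : ∃ z, Q = z * sigma (⟨0, Nat.succ_pos (k + 1)⟩ : Fin (k + 2))) :
    flipH (k + 2) Q * incl (k + 1) b ≠
      sigma (⟨0, Nat.succ_pos (k + 1)⟩ : Fin (k + 2)) := by
  obtain ⟨z, hz⟩ := hdiv
  obtain ⟨W, hW⟩ := mkW_surjective Q
  obtain ⟨wz, hwz⟩ := mkW_surjective z
  obtain ⟨wb, hwb⟩ := mkW_surjective b
  subst hW hwz hwb
  intro hEq
  rw [flipH_mkW, incl_mkW, ← mkW_append, sigma_eq_mkW] at hEq
  have h1 : W.map Fin.rev ++ wb.map Fin.castSucc =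
      [(⟨0, Nat.succ_pos (k + 1)⟩ : Fin (k + 2))] :=
    eq_of_mkW_frozen hEq (notRedex_singleton _)
  rw [sigma_eq_mkW, ← mkW_append] at hz
  cases W with
  | nil =>
      have h2 : wz ++ [(⟨0, Nat.succ_pos (k + 1)⟩ : Fin (k + 2))] = [] :=
        eq_of_mkW_frozen hz.symm notRedex_nil
      simp at h2
  | cons c t =>
      simp only [List.map_cons, List.cons_append, List.cons.injEq] at h1
      obtain ⟨hc, h1'⟩ := h1
      have ht : t = [] := by
        rcases List.append_eq_nil_iff.mp h1' with ⟨ht, -⟩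
        simpa using ht
      subst ht
      have h2 : wz ++ [(⟨0, Nat.succ_pos (k + 1)⟩ : Fin (k + 2))] = [c] :=
        eq_of_mkW_frozen hz.symm (notRedex_singleton c)
      have h3 : (⟨0, Nat.succ_pos (k + 1)⟩ : Fin (k + 2)) = c := by
        cases wz with
        | nil => simpa using h2
        | cons d s => simp at h2
      have h4 := congrArg Fin.val h3
      have h5 := congrArg Fin.val hc
      rw [Fin.val_rev] at h5
      simp only [Fin.val_mk] at h4 h5
      omega



lemma incl_eq_sigma0 {k : ℕ} {b : PosBraid (k + 1)}
    (h : incl (k + 1) b = sigma (⟨0, Nat.succ_pos (k + 1)⟩ : Fin (k + 1 + 1))) :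
    b = sigma (⟨0, Nat.succ_pos k⟩ : Fin (k + 1)) := by
  obtain ⟨wb, rfl⟩ := mkW_surjective b
  rw [incl_mkW, sigma_eq_mkW] at h
  have h1 : wb.map Fin.castSucc = [(⟨0, Nat.succ_pos (k + 1)⟩ : Fin (k + 1 + 1))] :=
    eq_of_mkW_frozen h (notRedex_singleton _)
  cases wb with
  | nil => simp at h1
  | cons c t =>
      simp only [List.map_cons, List.cons.injEq] at h1
      have ht : t = [] := by simpa using h1.2
      subst ht
      have hc : c = (⟨0, Nat.succ_pos k⟩ : Fin (k + 1)) := by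
        have := congrArg Fin.val h1.1
        exact Fin.ext (by simpa using this)
      rw [hc, sigma_eq_mkW]

lemma rev_zero_eq_last (k : ℕ) :
    Fin.rev (⟨0, Nat.succ_pos (k + 1)⟩ : Fin (k + 1 + 1)) = Fin.last (k + 1) := by
  ext
  simp [Fin.val_rev]

lemma isSplit_deltaFull_eq {k : ℕ} {l : List (PosBraid (k + 1))}
    (h : IsSplit (deltaFull (k + 2)) l) :
    l = [sigma (⟨0, Nat.succ_pos k⟩ : Fin (k + 1)), deltaFull (k + 1)] := by
  have hj := h.2.2
  rcases isSplit_cases h with ⟨rfl, hx⟩ | ⟨a, rfl, hx, ha⟩ | ⟨ys, a, hl, hys, hx, hdiv⟩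
  · exfalso
    rw [deltaFull_eq, ← mkW_nil] at hx
    have h1 := eq_of_mkW_frozen hx notRedex_nil
    have h2 := congrArg List.length h1
    rw [dword_length] at h2
    simp at h2
  · exfalso
    obtain ⟨w, rfl⟩ := mkW_surjective a
    rw [deltaFull_eq, incl_mkW] at hx
    have h1 : w.map Fin.castSucc = dword (k + 2) :=
      eq_of_mkW_frozen hx.symm (notRedex_dword _)
    rw [dword_succ] at h1
    cases w with
    | nil => simp at h1
    | cons c t =>
        simp only [List.map_cons, List.cons.injEq] at h1
        have h2 := congrArg Fin.val h1.1
        have hcl := c.isLt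
        simp [Fin.val_last] at h2
        omega
  · obtain ⟨W, hW⟩ :=
      mkW_surjective (prodFlip (⇑(flipH (k + 1 + 1))) (ys.map (incl (k + 1))))
    obtain ⟨wa, hwa⟩ := mkW_surjective a
    obtain ⟨z, hz⟩ := hdiv
    obtain ⟨wz, hwz⟩ := mkW_surjective z
    rw [hW, hwa] at hx
    rw [hW, hwz, sigma_eq_mkW, ← mkW_append] at hz
    rw [deltaFull_eq, flipH_mkW, incl_mkW, ← mkW_append] at hx
    have h1 : W.map Fin.rev ++ wa.map Fin.castSucc = dword (k + 2) :=
      eq_of_mkW_frozen hx.symm (notRedex_dword _)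
    have hWfr : ¬ Redex (k + 1 + 1) W := by
      have hpre : W.map Fin.rev <+: dword (k + 2) := ⟨_, h1⟩
      have hch := chain'_asc_revmap_of_prefix hpre
      rw [map_rev_map_rev] at hch
      exact notRedex_of_chain'_asc hch
    have h2 : wz ++ [(⟨0, Nat.succ_pos (k + 1)⟩ : Fin (k + 1 + 1))] = W :=
      eq_of_mkW_frozen hz.symm hWfr
    rw [← h2, List.map_append] at h1
    rw [dword_succ] at h1
    cases wz with
    | cons c t =>
        exfalso
        simp only [List.map_cons, List.map_singleton, List.cons_append,
          List.append_assoc, List.cons.injEq] at h1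
        have hmem : Fin.rev (⟨0, Nat.succ_pos (k + 1)⟩ : Fin (k + 1 + 1)) ∈
            (dword (k + 1)).map Fin.castSucc := by
          rw [← h1.2]
          simp
        rw [rev_zero_eq_last] at hmem
        obtain ⟨j, hj1, hj2⟩ := List.mem_map.mp hmem
        have hv := congrArg Fin.val hj2
        have hlt := j.isLt
        simp [Fin.val_last] at hv
        omega
    | nil =>
        simp only [List.map_nil, List.map_cons, List.map_singleton, List.nil_append,
          List.cons_append, List.cons.injEq, rev_zero_eq_last] at h1
        have hwa' : wa = dword (k + 1) :=
          List.map_injective_iff.mpr (Fin.castSucc_injective _) h1.2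
        subst hl
        rcases List.eq_nil_or_concat ys with rfl | ⟨ys', b, hys'⟩
        · exact absurd rfl hys
        · rw [List.concat_eq_append] at hys'
          subst hys'
          have hQ : prodFlip (⇑(flipH (k + 1 + 1))) ((ys' ++ [b]).map (incl (k + 1))) =
              sigma (⟨0, Nat.succ_pos (k + 1)⟩ : Fin (k + 1 + 1)) := by
            rw [hW, ← h2, sigma_eq_mkW]
            simp
          cases ys' with
          | nil =>
              simp only [List.nil_append, List.map_singleton,
                prodFlip_singleton] at hQ
              have hb := incl_eq_sigma0 hQ
              rw [hb, hwa, hwa', deltaFull_eq]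
              simp
          | cons c' t' =>
              exfalso
              have hlen2 : (c' :: t').length < (((c' :: t') ++ [b]) ++ [a]).length := by
                simp
              have h1' := hj (c' :: t').length (by simp) hlen2
              have htake : (((c' :: t') ++ [b]) ++ [a]).take (c' :: t').length
                  = c' :: t' := by
                rw [List.append_assoc]
                exact List.take_left
              rw [htake] at h1'
              rw [List.map_append, List.map_singleton,
                prodFlip_concat (flipH (k + 1 + 1))] at hQ
              exact flip_mul_incl_ne_sigma0 _ _ h1'.1 hQ

lemma isSplit_sigma0_eq {k : ℕ} {l : List (PosBraid (k + 1))}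
    (h : IsSplit (sigma (⟨0, Nat.succ_pos (k + 1)⟩ : Fin (k + 1 + 1))) l) :
    l = [sigma (⟨0, Nat.succ_pos k⟩ : Fin (k + 1))] := by
  rcases isSplit_cases h with ⟨rfl, hx⟩ | ⟨a, rfl, hx, ha⟩ | ⟨ys, a, hl, hys, hx, hdiv⟩
  · exact absurd hx (sigma_ne_one _)
  · rw [incl_eq_sigma0 hx.symm]
  · exact absurd hx.symm (flip_mul_incl_ne_sigma0 _ _ hdiv)



lemma ordP_one_iff (x y : PosBraid 1) :
    ordP 1 x y ↔ ∃ p q : ℕ, x = sigma (0 : Fin 1) ^ p ∧ y = sigma (0 : Fin 1) ^ q ∧ p < q :=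
  Iff.rfl

lemma ordP_succ_succ_iff (k : ℕ) (x y : PosBraid (k + 2)) :
    ordP (k + 2) x y ↔ ∃ lx ly : List (PosBraid (k + 1)),
      IsSplit x lx ∧ IsSplit y ly ∧ SL (ordP (k + 1)) lx ly :=
  Iff.rfl

lemma ordP_lt_sigma0 : ∀ (k : ℕ) (z : PosBraid (k + 1)),
    ordP (k + 1) z (sigma (⟨0, Nat.succ_pos k⟩ : Fin (k + 1))) → z = 1 := by
  intro k
  induction k with
  | zero =>
      rintro z ⟨p, q, rfl, hq, hpq⟩
      rw [sigma_eq_mkW, sigma_pow] at hq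
      have h1 := eq_of_mkW_frozen hq (notRedex_fin_one _)
      have h2 := congrArg List.length h1
      simp at h2
      have hp : p = 0 := by omega
      subst hp
      simp
  | succ k ih =>
      rintro z ⟨lz, ls, hz, hs, hsl⟩
      have hls := isSplit_sigma0_eq hs
      subst hls
      rcases hsl with hlen | ⟨hlen, hlex⟩
      · have hl0 : lz = [] := List.length_eq_zero_iff.mp (by simpa using hlen)
        subst hl0
        simpa [prodFlip] using hz.1
      · obtain ⟨a, rfl⟩ := List.length_eq_one_iff.mp (by simpa using hlen)
        cases hlex with
        | cons h' => cases h'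
        | rel h' =>
            have ha := ih _ h'
            exact absurd (by simp [ha]) hz.2.1



lemma mem_closure_castSucc {k : ℕ} (m : ℕ) (hm : k + 3 ≤ m) (w : List (Fin (k + 1))) :
    mkW (w.map Fin.castSucc) ∈ Submonoid.closure {z : PosBraid (k + 1 + 1) |
      ∃ i : Fin (k + 1 + 1), (i : ℕ) + 3 ≤ m ∧ z = sigma i} := by
  induction w with
  | nil => exact one_mem _
  | cons a t ih =>
      have : mkW ((a :: t).map Fin.castSucc) =
          sigma a.castSucc * mkW (t.map Fin.castSucc) := by
        rw [List.map_cons, sigma_eq_mkW, ← mkW_append]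
        rfl
      rw [this]
      refine mul_mem (Submonoid.subset_closure ?_) ih
      refine ⟨a.castSucc, ?_, rfl⟩
      have := a.isLt
      simp only [Fin.coe_castSucc]
      omega

lemma closure_map_incl {k : ℕ} (m : ℕ) {y : PosBraid (k + 1)}
    (hy : y ∈ Submonoid.closure {z : PosBraid (k + 1) |
      ∃ i : Fin (k + 1), (i : ℕ) + 3 ≤ m ∧ z = sigma i}) :
    incl (k + 1) y ∈ Submonoid.closure {z : PosBraid (k + 1 + 1) |
      ∃ i : Fin (k + 1 + 1), (i : ℕ) + 3 ≤ m ∧ z = sigma i} := by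
  induction hy using Submonoid.closure_induction with
  | mem z hz =>
      obtain ⟨i, hi, rfl⟩ := hz
      rw [incl_sigma]
      refine Submonoid.subset_closure ⟨i.castSucc, ?_, rfl⟩
      simpa using hi
  | one => rw [map_one]; exact one_mem _
  | mul a b ha hb iha ihb => rw [map_mul]; exact mul_mem iha ihb

lemma closure_incl_inv {k : ℕ} {m : ℕ} (hm : m ≤ k + 3) {y : PosBraid (k + 1 + 1)}
    (hy : y ∈ Submonoid.closure {z : PosBraid (k + 1 + 1) |
      ∃ i : Fin (k + 1 + 1), (i : ℕ) + 3 ≤ m ∧ z = sigma i}) :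
    ∃ y' : PosBraid (k + 1), incl (k + 1) y' = y ∧
      y' ∈ Submonoid.closure {z : PosBraid (k + 1) |
        ∃ i : Fin (k + 1), (i : ℕ) + 3 ≤ m ∧ z = sigma i} := by
  induction hy using Submonoid.closure_induction with
  | mem z hz =>
      obtain ⟨i, hi, rfl⟩ := hz
      have hlt : (i : ℕ) < k + 1 := by omega
      refine ⟨sigma ⟨(i : ℕ), hlt⟩, ?_, Submonoid.subset_closure ⟨⟨(i : ℕ), hlt⟩, ?_, rfl⟩⟩
      · have hcs : (⟨(i : ℕ), hlt⟩ : Fin (k + 1)).castSucc = i := by ext; simp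
        rw [incl_sigma, hcs]
      · simpa using hi
  | one => exact ⟨1, map_one _, one_mem _⟩
  | mul a b ha hb iha ihb =>
      obtain ⟨a', ha', ha''⟩ := iha
      obtain ⟨b', hb', hb''⟩ := ihb
      exact ⟨a' * b', by rw [map_mul, ha', hb'], mul_mem ha'' hb''⟩

lemma sigmaP_eq {N j : ℕ} (h : j < N) : sigmaP N j = sigma ⟨j, h⟩ := dif_pos h

lemma incl_sigmaP {k j : ℕ} (h : j < k + 1) :
    incl (k + 1) (sigmaP (k + 1) j) = sigmaP (k + 1 + 1) j := by
  have hcs : (⟨j, h⟩ : Fin (k + 1)).castSucc = (⟨j, Nat.lt_succ_of_lt h⟩ : Fin (k + 1 + 1)) := by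
    ext; simp
  rw [sigmaP_eq h, sigmaP_eq (Nat.lt_succ_of_lt h), incl_sigma, hcs]

lemma prod_map_sigmaP_incl {k : ℕ} (l : List ℕ) (hl : ∀ j ∈ l, j < k + 1) :
    (l.map (sigmaP (k + 1 + 1))).prod = incl (k + 1) ((l.map (sigmaP (k + 1))).prod) := by
  induction l with
  | nil => simp
  | cons a t ih =>
      simp only [List.map_cons, List.prod_cons, map_mul]
      rw [ih (fun j hj => hl j (List.mem_cons_of_mem a hj)),
        incl_sigmaP (hl a List.mem_cons_self)]

def topIdx (k : ℕ) : Fin (k + 1 + 1) := ⟨k + 1, Nat.lt_succ_self _⟩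

lemma splice (k m : ℕ) (hm2 : 2 ≤ m) (hm : m ≤ k + 2) (y' : PosBraid (k + 1)) :
    (((List.range' (m - 1) (k + 1 + 2 - m)).reverse).map (sigmaP (k + 1 + 1))).prod *
        incl (k + 1) y' =
      sigma (topIdx k) *
        incl (k + 1)
          ((((List.range' (m - 1) (k + 2 - m)).reverse).map (sigmaP (k + 1))).prod * y') := by
  have hsplit : List.range' (m - 1) (k + 1 + 2 - m) =
      List.range' (m - 1) (k + 2 - m) ++ [k + 1] := by
    have he : k + 1 + 2 - m = (k + 2 - m) + 1 := by omega
    rw [he, List.range'_concat]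
    congr 2
    omega
  have hmem : ∀ j ∈ (List.range' (m - 1) (k + 2 - m)).reverse, j < k + 1 := by
    intro j hj
    rw [List.mem_reverse, List.mem_range'_1] at hj
    omega
  rw [hsplit, List.reverse_append, List.reverse_singleton, List.singleton_append,
    List.map_cons, List.prod_cons, prod_map_sigmaP_incl _ hmem, map_mul,
    sigmaP_eq (Nat.lt_succ_self (k + 1)), mul_assoc]
  rfl

lemma deltaFull_succ (k : ℕ) :
    deltaFull (k + 1 + 1) = sigma (topIdx k) * incl (k + 1) (deltaFull (k + 1)) := by
  rw [deltaFull_eq, deltaFull_eq, incl_mkW, sigma_eq_mkW, ← mkW_append]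
  congr 1
  rw [dword_succ]
  rfl

lemma isSplit_nil {k : ℕ} : IsSplit (1 : PosBraid (k + 1)) ([] : List (PosBraid k)) := by
  refine ⟨rfl, by simp, ?_⟩
  intro j h1 h2
  simp at h2

lemma isSplit_single {k : ℕ} (a : PosBraid k) (ha : a ≠ 1) :
    IsSplit (incl k a) [a] := by
  refine ⟨by simp [prodFlip_singleton], by simpa, ?_⟩
  intro j h1 h2
  simp at h2
  omega

lemma sigma_right_divisor {N : ℕ} {i j : Fin N} (h : ∃ z, sigma j = z * sigma i) :
    i = j := by
  obtain ⟨z, hz⟩ := h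
  obtain ⟨wz, rfl⟩ := mkW_surjective z
  rw [sigma_eq_mkW, sigma_eq_mkW, ← mkW_append] at hz
  have h1 : wz ++ [i] = [j] := eq_of_mkW_frozen hz.symm (notRedex_singleton _)
  cases wz with
  | nil => simpa using h1
  | cons c t =>
      have := congrArg List.length h1
      simp at this

lemma rev_castSucc_zero (k : ℕ) :
    Fin.rev (Fin.castSucc (⟨0, Nat.succ_pos k⟩ : Fin (k + 1))) = topIdx k := by
  ext
  simp [Fin.val_rev, topIdx]

lemma isSplit_pair {k : ℕ} (x : PosBraid (k + 1 + 1)) (x₁ : PosBraid (k + 1))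
    (hx : x = sigma (topIdx k) * incl (k + 1) x₁) :
    IsSplit x [sigma (⟨0, Nat.succ_pos k⟩ : Fin (k + 1)), x₁] := by
  have hP : incl (k + 1) (sigma (⟨0, Nat.succ_pos k⟩ : Fin (k + 1))) =
      sigma (⟨0, Nat.succ_pos (k + 1)⟩ : Fin (k + 1 + 1)) := by
    rw [incl_sigma]
    congr 1
  refine ⟨?_, ?_, ?_⟩
  · rw [hx]
    rw [List.map_cons, List.map_singleton, prodFlip_pair, hP, flipH_sigma]
    congr 2
  · simpa using sigma_ne_one (⟨0, Nat.succ_pos k⟩ : Fin (k + 1))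
  · intro j h1 h2
    simp only [List.length_cons, List.length_nil] at h2
    have hj1 : j = 1 := by omega
    subst hj1
    have htake : List.take 1 [sigma (⟨0, Nat.succ_pos k⟩ : Fin (k + 1)), x₁] =
        [sigma (⟨0, Nat.succ_pos k⟩ : Fin (k + 1))] := rfl
    rw [htake]
    have hPP : prodFlip (⇑(flipH (k + 1 + 1)))
        ([sigma (⟨0, Nat.succ_pos k⟩ : Fin (k + 1))].map (incl (k + 1))) =
        sigma (⟨0, Nat.succ_pos (k + 1)⟩ : Fin (k + 1 + 1)) := by
      rw [List.map_singleton, prodFlip_singleton, hP]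
    rw [hPP]
    constructor
    · exact ⟨1, (one_mul _).symm⟩
    · intro i hi
      exact sigma_right_divisor hi



lemma prodFlip_pair_sigma0 {k : ℕ} (a₁ : PosBraid (k + 1)) :
    prodFlip (⇑(flipH (k + 1 + 1)))
        ([sigma (⟨0, Nat.succ_pos k⟩ : Fin (k + 1)), a₁].map (incl (k + 1))) =
      sigma (topIdx k) * incl (k + 1) a₁ := by
  rw [List.map_cons, List.map_singleton, prodFlip_pair, incl_sigma, flipH_sigma,
    rev_castSucc_zero]

end BraidAux


/-- in `B_n⁺` (`n = k+2 ≥ 2`), a positive braid `x` satisfies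
`x <⁺ δ_n` (where `δ_n = σ_{n-1} ⋯ σ_1`) if and only if `x = σ_{n-1} σ_{n-2} ⋯ σ_m · y`
for some `m` with `2 ≤ m ≤ n` and some `y ∈ B_{m-1}⁺`. -/
theorem lt_delta_iff (k : ℕ) (x : PosBraid (k + 1)) :
    ordP (k + 1) x (deltaFull (k + 1)) ↔
      ∃ m : ℕ, 2 ≤ m ∧ m ≤ k + 2 ∧
        ∃ y ∈ Submonoid.closure {z : PosBraid (k + 1) |
            ∃ i : Fin (k + 1), (i : ℕ) + 3 ≤ m ∧ z = sigma i},
          x = (((List.range' (m - 1) (k + 2 - m)).reverse).map (sigmaP (k + 1))).prod * y := by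
  open BraidAux in
  revert x
  induction k with
  | zero =>
      intro x
      constructor
      · rintro ⟨p, q, rfl, hq, hpq⟩
        refine ⟨2, le_refl 2, by omega, 1, one_mem _, ?_⟩
        rw [deltaFull_eq, sigma_pow] at hq
        have h1 := eq_of_mkW_frozen hq (notRedex_fin_one _)
        have h2 := congrArg List.length h1
        rw [dword_length] at h2
        simp at h2
        have hp : p = 0 := by omega
        subst hp
        simp [List.range']
      · rintro ⟨m, hm2, hm2', y, hy, rfl⟩
        have hm : m = 2 := le_antisymm hm2' hm2
        subst hm
        have hset : {z : PosBraid 1 | ∃ i : Fin 1, (i : ℕ) + 3 ≤ 2 ∧ z = sigma i} = ∅ := by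
          ext z
          simp only [Set.mem_setOf_eq, Set.mem_empty_iff_false, iff_false]
          rintro ⟨i, hi, -⟩
          omega
        rw [hset, Submonoid.closure_empty, Submonoid.mem_bot] at hy
        subst hy
        refine ⟨0, 1, by simp [List.range'], ?_, Nat.zero_lt_one⟩
        rw [pow_one, deltaFull_eq, sigma_eq_mkW]
        rfl
  | succ k ih =>
      intro x
      constructor
      · intro h
        obtain ⟨lx, ly, hx, hd, hsl⟩ := h
        have hly := isSplit_deltaFull_eq hd
        subst hly
        rcases hsl with hlen | ⟨hlen, hlex⟩
        · simp only [List.length_cons, List.length_nil] at hlen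
          rcases lx with _ | ⟨a, _ | ⟨b, t⟩⟩
          · have hx1 : x = 1 := by simpa [prodFlip] using hx.1
            refine ⟨k + 3, by omega, by omega, 1, one_mem _, ?_⟩
            rw [hx1]
            simp [show k + 1 + 2 - (k + 3) = 0 from by omega]
          · have hx1 : x = incl (k + 1) a := by
              simpa [prodFlip_singleton] using hx.1
            obtain ⟨w, rfl⟩ := mkW_surjective a
            rw [incl_mkW] at hx1
            refine ⟨k + 3, by omega, by omega, x, ?_, ?_⟩
            · rw [hx1]
              exact mem_closure_castSucc (k + 3) (le_refl _) w
            · simp [show k + 1 + 2 - (k + 3) = 0 from by omega]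
          · exfalso
            simp at hlen
        · simp only [List.length_cons, List.length_nil] at hlen
          rcases lx with _ | ⟨a₂, _ | ⟨a₁, _ | ⟨c, t⟩⟩⟩
          · simp at hlen
          · simp at hlen
          case cons.cons.cons => simp at hlen
          cases hlex with
          | rel h' =>
              have ha₂ := ordP_lt_sigma0 k a₂ h'
              exact absurd (by simp [ha₂]) hx.2.1
          | cons h' =>
              cases h' with
              | cons h'' => cases h''
              | rel h'' =>
                  obtain ⟨m, hm2, hmk, y', hy', ha₁⟩ := (ih a₁).mp h''
                  refine ⟨m, hm2, by omega, incl (k + 1) y',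
                    closure_map_incl m hy', ?_⟩
                  have hxe : x = sigma (topIdx k) * incl (k + 1) a₁ := by
                    rw [hx.1, prodFlip_pair_sigma0]
                  rw [splice k m hm2 hmk y', hxe, ha₁]
      · rintro ⟨m, hm2, hmk, y, hy, rfl⟩
        by_cases hm : m ≤ k + 2
        · obtain ⟨y', rfl, hy'⟩ := closure_incl_inv (by omega) hy
          have hord : ordP (k + 1)
              ((((List.range' (m - 1) (k + 2 - m)).reverse).map (sigmaP (k + 1))).prod * y')
              (deltaFull (k + 1)) :=
            (ih _).mpr ⟨m, hm2, hm, y', hy', rfl⟩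
          exact ⟨[sigma (⟨0, Nat.succ_pos k⟩ : Fin (k + 1)),
              (((List.range' (m - 1) (k + 2 - m)).reverse).map (sigmaP (k + 1))).prod * y'],
            [sigma (⟨0, Nat.succ_pos k⟩ : Fin (k + 1)), deltaFull (k + 1)],
            isSplit_pair _ _ (splice k m hm2 hm y'),
            isSplit_pair _ _ (deltaFull_succ k),
            Or.inr ⟨rfl, List.Lex.cons (List.Lex.rel hord)⟩⟩
        · have hm3 : m = k + 3 := by omega
          subst hm3
          obtain ⟨y', rfl, hy'⟩ := closure_incl_inv (le_refl _) hy
          have hx1 : (((List.range' (k + 3 - 1) (k + 1 + 2 - (k + 3))).reverse).map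
              (sigmaP (k + 1 + 1))).prod = 1 := by
            simp [show k + 1 + 2 - (k + 3) = 0 from by omega]
          rw [hx1, one_mul]
          by_cases hy1 : y' = 1
          · subst hy1
            rw [map_one]
            exact ⟨[], [sigma (⟨0, Nat.succ_pos k⟩ : Fin (k + 1)), deltaFull (k + 1)],
              isSplit_nil, isSplit_pair _ _ (deltaFull_succ k), Or.inl (by simp)⟩
          · exact ⟨[y'], [sigma (⟨0, Nat.succ_pos k⟩ : Fin (k + 1)), deltaFull (k + 1)],
              isSplit_single y' hy1, isSplit_pair _ _ (deltaFull_succ k),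
              Or.inl (by simp)⟩
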